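/- Let X_l = U_l Σ_l V_lᵀ and X = U Σ Vᵀ be two n×n real rank-r matrices (reduced SVDs), with σ_min(X) the smallest nonzero singular value of X. Then ‖U_l U_lᵀ − U Uᵀ‖ ≤ ‖X_l − X‖_F / σ_min(X), where ‖·‖ is the spectral norm. -/

import Mathlib

open Matrix

/-- The Frobenius norm of a real matrix. -/
noncomputable def frobNorm {m n : ℕ} (A : Matrix (Fin m) (Fin n) ℝ) : ℝ :=
  Real.sqrt (∑ i, ∑ j, (A i j) ^ 2)

/-- The spectral (operator) norm of a real matrix. -/
noncomputable def specNorm {m n : ℕ} (A : Matrix (Fin m) (Fin n) ℝ) : ℝ :=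
  ‖LinearMap.toContinuousLinearMap (Matrix.toEuclideanLin A)‖

open scoped Matrix.Norms.L2Operator

namespace Stmt9Aux

variable {m n k : ℕ}

lemma specNorm_eq (A : Matrix (Fin m) (Fin n) ℝ) : specNorm A = ‖A‖ := rfl

lemma tE_mul (A : Matrix (Fin m) (Fin n) ℝ) (B : Matrix (Fin n) (Fin k) ℝ)
    (x : EuclideanSpace ℝ (Fin k)) :
    toEuclideanLin (A * B) x = toEuclideanLin A (toEuclideanLin B x) := by
  simp [Matrix.toEuclideanLin_apply, Matrix.mulVec_mulVec]

lemma tE_one (x : EuclideanSpace ℝ (Fin n)) :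
    toEuclideanLin (1 : Matrix (Fin n) (Fin n) ℝ) x = x := by
  simp [Matrix.toEuclideanLin_apply]

lemma tE_inner (A : Matrix (Fin m) (Fin n) ℝ) (x : EuclideanSpace ℝ (Fin n))
    (y : EuclideanSpace ℝ (Fin m)) :
    (inner ℝ (toEuclideanLin A x) y : ℝ) = inner ℝ x (toEuclideanLin Aᵀ y) := by
  simp only [PiLp.inner_apply, RCLike.inner_apply, starRingEnd_apply, star_trivial,
    Matrix.toEuclideanLin_apply, PiLp.toLp_apply,
    Matrix.mulVec, dotProduct, Matrix.transpose_apply, Finset.sum_mul, Finset.mul_sum]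
  rw [Finset.sum_comm]
  apply Finset.sum_congr rfl; intro j _
  apply Finset.sum_congr rfl; intro i _
  ring

lemma norm_tE_le (A : Matrix (Fin m) (Fin n) ℝ) (x : EuclideanSpace ℝ (Fin n)) :
    ‖toEuclideanLin A x‖ ≤ ‖A‖ * ‖x‖ :=
  (LinearMap.toContinuousLinearMap (Matrix.toEuclideanLin A)).le_opNorm x

lemma specNorm_le (A : Matrix (Fin m) (Fin n) ℝ) {c : ℝ} (hc : 0 ≤ c)
    (h : ∀ x : EuclideanSpace ℝ (Fin n), ‖toEuclideanLin A x‖ ≤ c * ‖x‖) : ‖A‖ ≤ c :=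
  ContinuousLinearMap.opNorm_le_bound _ hc h

lemma iso {U : Matrix (Fin m) (Fin n) ℝ} (hU : Uᵀ * U = 1)
    (z : EuclideanSpace ℝ (Fin n)) : ‖toEuclideanLin U z‖ = ‖z‖ := by
  have h1 : (inner ℝ (toEuclideanLin U z) (toEuclideanLin U z) : ℝ) = inner ℝ z z := by
    rw [tE_inner, ← tE_mul, hU, tE_one]
  have := real_inner_self_eq_norm_sq (toEuclideanLin U z)
  have h2 := real_inner_self_eq_norm_sq z
  nlinarith [norm_nonneg (toEuclideanLin U z), norm_nonneg z]


lemma norm_eu (x : EuclideanSpace ℝ (Fin n)) : ‖x‖ = Real.sqrt (∑ i, (x i) ^ 2) := by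
  rw [EuclideanSpace.norm_eq]
  congr 1
  exact Finset.sum_congr rfl fun i _ => by rw [Real.norm_eq_abs, sq_abs]

lemma spec_le_frob (A : Matrix (Fin m) (Fin n) ℝ) : ‖A‖ ≤ frobNorm A := by
  have hf : 0 ≤ frobNorm A := Real.sqrt_nonneg _
  apply specNorm_le A hf
  intro x
  have hx : 0 ≤ ‖x‖ := norm_nonneg x
  have h1 : ‖toEuclideanLin A x‖ ^ 2 ≤ (frobNorm A * ‖x‖) ^ 2 := by
    rw [norm_eu]
    rw [Real.sq_sqrt (by positivity)]
    have hxe : ‖x‖ ^ 2 = ∑ j, (x j) ^ 2 := by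
      rw [norm_eu]; rw [Real.sq_sqrt (by positivity)]
    have hfe : frobNorm A ^ 2 = ∑ i, ∑ j, (A i j) ^ 2 := by
      unfold frobNorm
      rw [Real.sq_sqrt (by positivity)]
    rw [mul_pow, hxe, hfe, Finset.sum_mul]
    apply Finset.sum_le_sum
    intro i _
    have : toEuclideanLin A x i = ∑ j, A i j * x j := by
      simp [Matrix.toEuclideanLin_apply, Matrix.mulVec, dotProduct]
    rw [this]
    exact Finset.sum_mul_sq_le_sq_mul_sq _ _ _
  nlinarith [norm_nonneg (toEuclideanLin A x), mul_nonneg hf hx]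


lemma spec_transpose (A : Matrix (Fin m) (Fin n) ℝ) : ‖Aᵀ‖ = ‖A‖ := by
  rw [← Matrix.conjTranspose_eq_transpose_of_trivial]
  exact Matrix.l2_opNorm_conjTranspose A

/-- Pythagoras for the projection `W * Wᵀ`. -/
lemma pyth {W : Matrix (Fin m) (Fin n) ℝ} (hW : Wᵀ * W = 1)
    (y : EuclideanSpace ℝ (Fin m)) :
    ‖y - toEuclideanLin (W * Wᵀ) y‖ ^ 2 = ‖y‖ ^ 2 - ‖toEuclideanLin Wᵀ y‖ ^ 2 := by
  have hPy : toEuclideanLin (W * Wᵀ) y = toEuclideanLin W (toEuclideanLin Wᵀ y) := tE_mul ..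
  have hip : (inner ℝ y (toEuclideanLin (W * Wᵀ) y) : ℝ) = ‖toEuclideanLin Wᵀ y‖ ^ 2 := by
    rw [hPy, real_inner_comm, tE_inner]
    exact real_inner_self_eq_norm_sq _
  have hn : ‖toEuclideanLin (W * Wᵀ) y‖ = ‖toEuclideanLin Wᵀ y‖ := by
    rw [hPy]; exact iso hW _
  rw [norm_sub_sq_real, hip, hn]; ring

lemma norm_proj {W : Matrix (Fin m) (Fin n) ℝ} (hW : Wᵀ * W = 1)
    (y : EuclideanSpace ℝ (Fin m)) :
    ‖toEuclideanLin (W * Wᵀ) y‖ = ‖toEuclideanLin Wᵀ y‖ := by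
  rw [tE_mul]; exact iso hW _


lemma diag_inv_bound {r : ℕ} {d : Fin r → ℝ} {σ : ℝ} (hσ : 0 < σ) (hle : ∀ i, σ ≤ d i)
    (x : EuclideanSpace ℝ (Fin r)) :
    ‖toEuclideanLin (Matrix.diagonal fun i => (d i)⁻¹) x‖ ≤ σ⁻¹ * ‖x‖ := by
  rw [norm_eu, norm_eu]
  have h1 : σ⁻¹ * Real.sqrt (∑ i, x i ^ 2) = Real.sqrt (σ⁻¹ ^ 2 * ∑ i, x i ^ 2) := by
    rw [Real.sqrt_mul (sq_nonneg _), Real.sqrt_sq (by positivity)]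
  rw [h1]
  apply Real.sqrt_le_sqrt
  rw [Finset.mul_sum]
  apply Finset.sum_le_sum
  intro i _
  have happ : toEuclideanLin (Matrix.diagonal fun i => (d i)⁻¹) x i = (d i)⁻¹ * x i := by
    simp [Matrix.toEuclideanLin_apply, Matrix.mulVec_diagonal]
  rw [happ, mul_pow]
  have hd : 0 < d i := lt_of_lt_of_le hσ (hle i)
  have : (d i)⁻¹ ≤ σ⁻¹ := by
    exact inv_anti₀ hσ (hle i)
  have h2 : ((d i)⁻¹) ^ 2 ≤ (σ⁻¹) ^ 2 := by
    apply pow_le_pow_left₀ (by positivity) this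
  nlinarith [sq_nonneg (x i)]

lemma sigma_transfer {r : ℕ} {B : Matrix (Fin r) (Fin r) ℝ} {c : ℝ} (hc : 0 < c)
    (h : ∀ z : EuclideanSpace ℝ (Fin r), c * ‖z‖ ≤ ‖toEuclideanLin B z‖) :
    ∀ z : EuclideanSpace ℝ (Fin r), c * ‖z‖ ≤ ‖toEuclideanLin Bᵀ z‖ := by
  have hinj : Function.Injective B.mulVec := by
    intro v w hvw
    have hz := h ((WithLp.equiv 2 (Fin r → ℝ)).symm (v - w))
    rw [WithLp.equiv_symm_apply, Matrix.toEuclideanLin_apply_piLp_toLp, Matrix.mulVec_sub, hvw, sub_self] at hz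
    simp at hz
    change c * ‖(WithLp.equiv 2 (Fin r → ℝ)).symm v - (WithLp.equiv 2 (Fin r → ℝ)).symm w‖ ≤ 0 at hz
    have h0 : ‖(WithLp.equiv 2 (Fin r → ℝ)).symm v - (WithLp.equiv 2 (Fin r → ℝ)).symm w‖ = 0 := by
      nlinarith [norm_nonneg ((WithLp.equiv 2 (Fin r → ℝ)).symm v -
        (WithLp.equiv 2 (Fin r → ℝ)).symm w)]
    have h1 : (WithLp.equiv 2 (Fin r → ℝ)).symm v = (WithLp.equiv 2 (Fin r → ℝ)).symm w :=
      sub_eq_zero.mp (norm_eq_zero.mp h0)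
    exact (WithLp.equiv 2 (Fin r → ℝ)).symm.injective h1
  have hdet : IsUnit B.det := (Matrix.isUnit_iff_isUnit_det B).mp
    (Matrix.mulVec_injective_iff_isUnit.mp hinj)
  have hdetT : IsUnit Bᵀ.det := by rw [Matrix.det_transpose]; exact hdet
  have hBinv : B * B⁻¹ = 1 := Matrix.mul_nonsing_inv B hdet
  have hTinv : B⁻¹ᵀ * Bᵀ = 1 := by rw [← Matrix.transpose_mul, hBinv, Matrix.transpose_one]
  have hnormInv : ‖B⁻¹‖ ≤ c⁻¹ := by
    apply specNorm_le _ (by positivity)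
    intro w
    have hBz : toEuclideanLin B (toEuclideanLin B⁻¹ w) = w := by
      rw [← tE_mul, hBinv, tE_one]
    have := h (toEuclideanLin B⁻¹ w)
    rw [hBz] at this
    rw [← mul_le_mul_iff_right₀ hc]
    calc c * ‖toEuclideanLin B⁻¹ w‖ ≤ ‖w‖ := this
      _ ≤ c * (c⁻¹ * ‖w‖) := by rw [← mul_assoc, mul_inv_cancel₀ (ne_of_gt hc), one_mul]
  have hT : ‖B⁻¹ᵀ‖ ≤ c⁻¹ := by rw [spec_transpose]; exact hnormInv
  intro z
  have hzeq : z = toEuclideanLin B⁻¹ᵀ (toEuclideanLin Bᵀ z) := by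
    rw [← tE_mul, hTinv, tE_one]
  have : ‖z‖ ≤ c⁻¹ * ‖toEuclideanLin Bᵀ z‖ := by
    calc ‖z‖ = ‖toEuclideanLin B⁻¹ᵀ (toEuclideanLin Bᵀ z)‖ := by rw [← hzeq]
      _ ≤ ‖B⁻¹ᵀ‖ * ‖toEuclideanLin Bᵀ z‖ := norm_tE_le _ _
      _ ≤ c⁻¹ * ‖toEuclideanLin Bᵀ z‖ := by
          apply mul_le_mul_of_nonneg_right hT (norm_nonneg _)
  calc c * ‖z‖ ≤ c * (c⁻¹ * ‖toEuclideanLin Bᵀ z‖) :=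
        mul_le_mul_of_nonneg_left this (le_of_lt hc)
    _ = ‖toEuclideanLin Bᵀ z‖ := by
        rw [← mul_assoc, mul_inv_cancel₀ (ne_of_gt hc), one_mul]


lemma tE_sub (A B : Matrix (Fin m) (Fin n) ℝ) (x : EuclideanSpace ℝ (Fin n)) :
    toEuclideanLin (A - B) x = toEuclideanLin A x - toEuclideanLin B x := by
  rw [map_sub]; rfl

lemma frob_comm (A B : Matrix (Fin m) (Fin n) ℝ) : frobNorm (A - B) = frobNorm (B - A) := by
  unfold frobNorm
  congr 1
  apply Finset.sum_congr rfl; intro i _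
  apply Finset.sum_congr rfl; intro j _
  simp only [Matrix.sub_apply]
  ring

end Stmt9Aux

set_option maxHeartbeats 2000000 in
open Stmt9Aux in
theorem stmt9 {n r : ℕ} [NeZero r]
    (Ul U Vl V : Matrix (Fin n) (Fin r) ℝ)
    (dl d : Fin r → ℝ) (hdl : ∀ i, 0 < dl i) (hd : ∀ i, 0 < d i)
    (hUl : Ulᵀ * Ul = 1) (hU : Uᵀ * U = 1) (hVl : Vlᵀ * Vl = 1) (hV : Vᵀ * V = 1)
    (Xl X : Matrix (Fin n) (Fin n) ℝ)
    (hXl : Xl = Ul * Matrix.diagonal dl * Vlᵀ)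
    (hX : X = U * Matrix.diagonal d * Vᵀ) :
    specNorm (Ul * Ulᵀ - U * Uᵀ) ≤ frobNorm (Xl - X) / (⨅ i, d i) := by
  classical
  set σ : ℝ := ⨅ i, d i with hσdef
  set F : ℝ := frobNorm (Xl - X) with hFdef
  have hσle : ∀ i, σ ≤ d i := fun i => ciInf_le (Finite.bddBelow_range d) i
  have hσpos : 0 < σ := by
    obtain ⟨i₀, hi₀⟩ := Finite.exists_min d
    have h1 : d i₀ ≤ σ := le_ciInf hi₀
    linarith [hd i₀]
  have hF0 : 0 ≤ F := Real.sqrt_nonneg _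
  set ε : ℝ := F / σ with hεdef
  have hε0 : 0 ≤ ε := div_nonneg hF0 (le_of_lt hσpos)
  -- basic matrix identities
  have hQXl : (Ul * Ulᵀ) * Xl = Xl := by
    rw [hXl]
    simp only [Matrix.mul_assoc]
    rw [← Matrix.mul_assoc Ulᵀ Ul, hUl, Matrix.one_mul]
  have hXV : X * V = U * Matrix.diagonal d := by
    rw [hX, Matrix.mul_assoc (U * Matrix.diagonal d), hV, Matrix.mul_one]
  have key : ((1 - Ul * Ulᵀ) * U) * Matrix.diagonal d
      = ((1 - Ul * Ulᵀ) * (X - Xl)) * V := by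
    have h0 : (1 - Ul * Ulᵀ) * Xl = 0 := by
      rw [Matrix.sub_mul, Matrix.one_mul, hQXl, sub_self]
    have h1 : (1 - Ul * Ulᵀ) * (X - Xl) = (1 - Ul * Ulᵀ) * X := by
      rw [Matrix.mul_sub, h0, sub_zero]
    rw [h1, Matrix.mul_assoc, Matrix.mul_assoc, hXV]
  -- norms of isometries and projections
  have hVnorm : ‖V‖ ≤ (1 : ℝ) := by
    apply specNorm_le _ zero_le_one
    intro z; rw [iso hV, one_mul]
  have h1Qnorm : ‖(1 : Matrix (Fin n) (Fin n) ℝ) - Ul * Ulᵀ‖ ≤ 1 := by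
    apply specNorm_le _ zero_le_one
    intro x
    rw [tE_sub, tE_one, one_mul]
    have hp := pyth hUl x
    nlinarith [norm_nonneg (x - toEuclideanLin (Ul * Ulᵀ) x), norm_nonneg x,
      sq_nonneg ‖toEuclideanLin Ulᵀ x‖]
  -- diag inverse setup
  have hDD : Matrix.diagonal d * Matrix.diagonal (fun i => (d i)⁻¹) = 1 := by
    rw [Matrix.diagonal_mul_diagonal]
    have : (fun i => d i * (d i)⁻¹) = fun _ : Fin r => (1 : ℝ) := by
      funext i; exact mul_inv_cancel₀ (ne_of_gt (hd i))
    rw [this, Matrix.diagonal_one]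
  -- the matrix ((1-Q)*(X-Xl))*V has norm ≤ F
  have hMid : ‖((1 - Ul * Ulᵀ) * (X - Xl)) * V‖ ≤ F := by
    calc ‖((1 - Ul * Ulᵀ) * (X - Xl)) * V‖
        ≤ ‖(1 - Ul * Ulᵀ) * (X - Xl)‖ * ‖V‖ := Matrix.l2_opNorm_mul _ _
      _ ≤ ‖(1 - Ul * Ulᵀ) * (X - Xl)‖ * 1 := by
          apply mul_le_mul_of_nonneg_left hVnorm (norm_nonneg _)
      _ = ‖(1 - Ul * Ulᵀ) * (X - Xl)‖ := mul_one _
      _ ≤ ‖(1 : Matrix (Fin n) (Fin n) ℝ) - Ul * Ulᵀ‖ * ‖X - Xl‖ := Matrix.l2_opNorm_mul _ _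
      _ ≤ 1 * ‖X - Xl‖ := mul_le_mul_of_nonneg_right h1Qnorm (norm_nonneg _)
      _ = ‖X - Xl‖ := one_mul _
      _ ≤ frobNorm (X - Xl) := spec_le_frob _
      _ = F := by rw [hFdef, frob_comm]
  -- α bound
  have hα : ‖(1 - Ul * Ulᵀ) * U‖ ≤ ε := by
    apply specNorm_le _ hε0
    intro z
    have heq : ((1 - Ul * Ulᵀ) * U)
        = (((1 - Ul * Ulᵀ) * U) * Matrix.diagonal d) * Matrix.diagonal (fun i => (d i)⁻¹) := by
      rw [Matrix.mul_assoc, hDD, Matrix.mul_one]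
    calc ‖toEuclideanLin ((1 - Ul * Ulᵀ) * U) z‖
        = ‖toEuclideanLin (((1 - Ul * Ulᵀ) * U) * Matrix.diagonal d)
            (toEuclideanLin (Matrix.diagonal (fun i => (d i)⁻¹)) z)‖ := by
          conv_lhs => rw [heq, tE_mul]
      _ ≤ ‖((1 - Ul * Ulᵀ) * U) * Matrix.diagonal d‖ *
            ‖toEuclideanLin (Matrix.diagonal (fun i => (d i)⁻¹)) z‖ := norm_tE_le _ _
      _ ≤ F * (σ⁻¹ * ‖z‖) := by
          apply mul_le_mul (by rw [key]; exact hMid)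
            (diag_inv_bound hσpos hσle z) (norm_nonneg _) hF0
      _ = ε * ‖z‖ := by rw [hεdef, div_eq_mul_inv]; ring
  -- β bound
  have hβ : ‖(1 - U * Uᵀ) * Ul‖ ≤ ε := by
    rcases le_or_gt 1 ε with hε1 | hε1
    · apply specNorm_le _ hε0
      intro z
      have h2 : toEuclideanLin ((1 - U * Uᵀ) * Ul) z =
          toEuclideanLin Ul z - toEuclideanLin (U * Uᵀ) (toEuclideanLin Ul z) := by
        rw [tE_mul, tE_sub, tE_one]
      rw [h2]
      have hp := pyth hU (toEuclideanLin Ul z)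
      have h4 : ‖toEuclideanLin Ul z‖ = ‖z‖ := iso hUl z
      rw [h4] at hp
      set t : ℝ := ‖toEuclideanLin Ul z - toEuclideanLin (U * Uᵀ) (toEuclideanLin Ul z)‖
        with htdef
      set u : ℝ := ‖toEuclideanLin Uᵀ (toEuclideanLin Ul z)‖ with hudef
      have ht0 : 0 ≤ t := norm_nonneg _
      have hz0 : (0:ℝ) ≤ ‖z‖ := norm_nonneg _
      have ht1 : t ≤ ‖z‖ := by nlinarith [sq_nonneg u]
      calc t ≤ ‖z‖ := ht1
        _ ≤ ε * ‖z‖ := le_mul_of_one_le_left hz0 hε1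
    · -- ε < 1
      have hc2' : (0:ℝ) < 1 - ε ^ 2 := by nlinarith
      set c : ℝ := Real.sqrt (1 - ε ^ 2) with hcdef
      have hc2 : c ^ 2 = 1 - ε ^ 2 := Real.sq_sqrt (le_of_lt hc2')
      have hcpos : 0 < c := Real.sqrt_pos.mpr hc2'
      have hA' : ∀ z : EuclideanSpace ℝ (Fin r),
          c * ‖z‖ ≤ ‖toEuclideanLin (Ulᵀ * U) z‖ := by
        intro z
        have h1 : ‖toEuclideanLin ((1 - Ul * Ulᵀ) * U) z‖ ≤ ε * ‖z‖ := by
          calc ‖toEuclideanLin ((1 - Ul * Ulᵀ) * U) z‖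
              ≤ ‖(1 - Ul * Ulᵀ) * U‖ * ‖z‖ := norm_tE_le _ _
            _ ≤ ε * ‖z‖ := mul_le_mul_of_nonneg_right hα (norm_nonneg _)
        have h2 : toEuclideanLin ((1 - Ul * Ulᵀ) * U) z =
            toEuclideanLin U z - toEuclideanLin (Ul * Ulᵀ) (toEuclideanLin U z) := by
          rw [tE_mul, tE_sub, tE_one]
        have hp := pyth hUl (toEuclideanLin U z)
        have h3 : toEuclideanLin Ulᵀ (toEuclideanLin U z) = toEuclideanLin (Ulᵀ * U) z := by
          rw [tE_mul]
        have h4 : ‖toEuclideanLin U z‖ = ‖z‖ := iso hU z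
        rw [h3, h4] at hp
        rw [h2] at h1
        set t : ℝ := ‖toEuclideanLin U z - toEuclideanLin (Ul * Ulᵀ) (toEuclideanLin U z)‖
          with htdef
        set w : ℝ := ‖toEuclideanLin (Ulᵀ * U) z‖ with hwdef
        have ht0 : 0 ≤ t := norm_nonneg _
        have hw0 : 0 ≤ w := norm_nonneg _
        have hz0 : (0:ℝ) ≤ ‖z‖ := norm_nonneg _
        have hεz0 : 0 ≤ ε * ‖z‖ := mul_nonneg hε0 hz0
        have ht2 : t ^ 2 ≤ (ε * ‖z‖) ^ 2 := pow_le_pow_left₀ ht0 h1 2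
        have hcz0 : 0 ≤ c * ‖z‖ := mul_nonneg (le_of_lt hcpos) hz0
        have hw2 : (c * ‖z‖) ^ 2 ≤ w ^ 2 := by nlinarith [hp, hc2, ht2]
        nlinarith [hw2, hw0, hcz0]
      have hA : ∀ z : EuclideanSpace ℝ (Fin r),
          c * ‖z‖ ≤ ‖toEuclideanLin (Uᵀ * Ul) z‖ := by
        have h5 : (Ulᵀ * U)ᵀ = Uᵀ * Ul := by
          rw [Matrix.transpose_mul, Matrix.transpose_transpose]
        intro z
        have h6 := sigma_transfer hcpos hA' z
        rw [h5] at h6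
        exact h6
      apply specNorm_le _ hε0
      intro z
      have h2 : toEuclideanLin ((1 - U * Uᵀ) * Ul) z =
          toEuclideanLin Ul z - toEuclideanLin (U * Uᵀ) (toEuclideanLin Ul z) := by
        rw [tE_mul, tE_sub, tE_one]
      have hp := pyth hU (toEuclideanLin Ul z)
      have h3 : toEuclideanLin Uᵀ (toEuclideanLin Ul z) = toEuclideanLin (Uᵀ * Ul) z := by
        rw [tE_mul]
      have h4 : ‖toEuclideanLin Ul z‖ = ‖z‖ := iso hUl z
      rw [h3, h4] at hp
      rw [h2]
      have h7 := hA z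
      set t : ℝ := ‖toEuclideanLin Ul z - toEuclideanLin (U * Uᵀ) (toEuclideanLin Ul z)‖
        with htdef
      set w : ℝ := ‖toEuclideanLin (Uᵀ * Ul) z‖ with hwdef
      have ht0 : 0 ≤ t := norm_nonneg _
      have hw0 : 0 ≤ w := norm_nonneg _
      have hz0 : (0:ℝ) ≤ ‖z‖ := norm_nonneg _
      have hcz0 : 0 ≤ c * ‖z‖ := mul_nonneg (le_of_lt hcpos) hz0
      have hεz0 : 0 ≤ ε * ‖z‖ := mul_nonneg hε0 hz0
      have hw2 : (c * ‖z‖) ^ 2 ≤ w ^ 2 := pow_le_pow_left₀ hcz0 h7 2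
      have ht2 : t ^ 2 ≤ (ε * ‖z‖) ^ 2 := by nlinarith [hp, hc2, hw2]
      nlinarith [ht2, ht0, hεz0]
  -- final assembly
  rw [specNorm_eq]
  apply specNorm_le _ hε0
  intro x
  have hQQ : (Ul * Ulᵀ) * (Ul * Ulᵀ) = Ul * Ulᵀ := by
    simp only [Matrix.mul_assoc]
    rw [← Matrix.mul_assoc Ulᵀ Ul, hUl, Matrix.one_mul]
  have hQsym : (Ul * Ulᵀ)ᵀ = Ul * Ulᵀ := by
    rw [Matrix.transpose_mul, Matrix.transpose_transpose]
  have hPP : (U * Uᵀ) * (U * Uᵀ) = U * Uᵀ := by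
    simp only [Matrix.mul_assoc]
    rw [← Matrix.mul_assoc Uᵀ U, hU, Matrix.one_mul]
  -- orthogonality
  have hQa : toEuclideanLin (Ul * Ulᵀ)
      (toEuclideanLin (U * Uᵀ) x
        - toEuclideanLin (Ul * Ulᵀ) (toEuclideanLin (U * Uᵀ) x)) = 0 := by
    rw [map_sub]
    rw [← tE_mul (Ul * Ulᵀ) (Ul * Ulᵀ) (toEuclideanLin (U * Uᵀ) x), hQQ, sub_self]
  have horth : (inner ℝ (toEuclideanLin (Ul * Ulᵀ) (x - toEuclideanLin (U * Uᵀ) x))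
      (toEuclideanLin (U * Uᵀ) x
        - toEuclideanLin (Ul * Ulᵀ) (toEuclideanLin (U * Uᵀ) x)) : ℝ) = 0 := by
    rw [tE_inner, hQsym, hQa, inner_zero_right]
  have hdiff : toEuclideanLin (Ul * Ulᵀ - U * Uᵀ) x
      = toEuclideanLin (Ul * Ulᵀ) (x - toEuclideanLin (U * Uᵀ) x)
        - (toEuclideanLin (U * Uᵀ) x
            - toEuclideanLin (Ul * Ulᵀ) (toEuclideanLin (U * Uᵀ) x)) := by
    rw [tE_sub, map_sub]
    abel
  have hsplit : ‖toEuclideanLin (Ul * Ulᵀ) (x - toEuclideanLin (U * Uᵀ) x)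
        - (toEuclideanLin (U * Uᵀ) x
            - toEuclideanLin (Ul * Ulᵀ) (toEuclideanLin (U * Uᵀ) x))‖ ^ 2
      = ‖toEuclideanLin (Ul * Ulᵀ) (x - toEuclideanLin (U * Uᵀ) x)‖ ^ 2
        + ‖toEuclideanLin (U * Uᵀ) x
            - toEuclideanLin (Ul * Ulᵀ) (toEuclideanLin (U * Uᵀ) x)‖ ^ 2 := by
    rw [norm_sub_sq_real, horth]
    ring
  -- bound on a
  have ha_bound : ‖toEuclideanLin (U * Uᵀ) x
      - toEuclideanLin (Ul * Ulᵀ) (toEuclideanLin (U * Uᵀ) x)‖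
      ≤ ε * ‖toEuclideanLin Uᵀ x‖ := by
    have e2 : toEuclideanLin (U * Uᵀ) x = toEuclideanLin U (toEuclideanLin Uᵀ x) :=
      tE_mul _ _ _
    have h8 : toEuclideanLin (U * Uᵀ) x
        - toEuclideanLin (Ul * Ulᵀ) (toEuclideanLin (U * Uᵀ) x)
        = toEuclideanLin ((1 - Ul * Ulᵀ) * U) (toEuclideanLin Uᵀ x) := by
      rw [e2, ← tE_mul (Ul * Ulᵀ) U (toEuclideanLin Uᵀ x), Matrix.sub_mul, Matrix.one_mul,
        tE_sub]
    rw [h8]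
    calc ‖toEuclideanLin ((1 - Ul * Ulᵀ) * U) (toEuclideanLin Uᵀ x)‖
        ≤ ‖(1 - Ul * Ulᵀ) * U‖ * ‖toEuclideanLin Uᵀ x‖ := norm_tE_le _ _
      _ ≤ ε * ‖toEuclideanLin Uᵀ x‖ := mul_le_mul_of_nonneg_right hα (norm_nonneg _)
  -- bound on b
  have hP1 : (1 - U * Uᵀ) * (1 - U * Uᵀ) = 1 - U * Uᵀ := by
    simp only [Matrix.mul_sub, Matrix.sub_mul, Matrix.one_mul, Matrix.mul_one, hPP]
    abel
  have e4 : toEuclideanLin (1 - U * Uᵀ) x = x - toEuclideanLin (U * Uᵀ) x := by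
    rw [tE_sub, tE_one]
  have e5 : toEuclideanLin (1 - U * Uᵀ) (x - toEuclideanLin (U * Uᵀ) x)
      = x - toEuclideanLin (U * Uᵀ) x := by
    conv_lhs => rw [← e4]
    rw [← tE_mul (1 - U * Uᵀ) (1 - U * Uᵀ) x, hP1, e4]
  have hb_bound : ‖toEuclideanLin (Ul * Ulᵀ) (x - toEuclideanLin (U * Uᵀ) x)‖
      ≤ ε * ‖x - toEuclideanLin (U * Uᵀ) x‖ := by
    have h9 : ‖toEuclideanLin (Ul * Ulᵀ) (x - toEuclideanLin (U * Uᵀ) x)‖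
        = ‖toEuclideanLin Ulᵀ (x - toEuclideanLin (U * Uᵀ) x)‖ := norm_proj hUl _
    have h10 : toEuclideanLin Ulᵀ (x - toEuclideanLin (U * Uᵀ) x)
        = toEuclideanLin (Ulᵀ * (1 - U * Uᵀ)) (x - toEuclideanLin (U * Uᵀ) x) := by
      conv_lhs => rw [← e5]
      rw [← tE_mul Ulᵀ (1 - U * Uᵀ) (x - toEuclideanLin (U * Uᵀ) x)]
    have h12 : ((1 - U * Uᵀ) * Ul)ᵀ = Ulᵀ * (1 - U * Uᵀ) := by
      rw [Matrix.transpose_mul, Matrix.transpose_sub, Matrix.transpose_one,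
        Matrix.transpose_mul, Matrix.transpose_transpose]
    have h11 : ‖Ulᵀ * (1 - U * Uᵀ)‖ = ‖(1 - U * Uᵀ) * Ul‖ := by
      rw [← h12, spec_transpose]
    rw [h9, h10]
    calc ‖toEuclideanLin (Ulᵀ * (1 - U * Uᵀ)) (x - toEuclideanLin (U * Uᵀ) x)‖
        ≤ ‖Ulᵀ * (1 - U * Uᵀ)‖ * ‖x - toEuclideanLin (U * Uᵀ) x‖ := norm_tE_le _ _
      _ = ‖(1 - U * Uᵀ) * Ul‖ * ‖x - toEuclideanLin (U * Uᵀ) x‖ := by rw [h11]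
      _ ≤ ε * ‖x - toEuclideanLin (U * Uᵀ) x‖ :=
          mul_le_mul_of_nonneg_right hβ (norm_nonneg _)
  -- Pythagoras for x
  have hpyth : ‖x - toEuclideanLin (U * Uᵀ) x‖ ^ 2 = ‖x‖ ^ 2 - ‖toEuclideanLin Uᵀ x‖ ^ 2 :=
    pyth hU x
  -- conclude
  have hfinal : ‖toEuclideanLin (Ul * Ulᵀ - U * Uᵀ) x‖ ^ 2 ≤ (ε * ‖x‖) ^ 2 := by
    rw [hdiff, hsplit]
    have h1 : ‖toEuclideanLin (U * Uᵀ) x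
        - toEuclideanLin (Ul * Ulᵀ) (toEuclideanLin (U * Uᵀ) x)‖ ^ 2
        ≤ (ε * ‖toEuclideanLin Uᵀ x‖) ^ 2 :=
      pow_le_pow_left₀ (norm_nonneg _) ha_bound 2
    have h2 : ‖toEuclideanLin (Ul * Ulᵀ) (x - toEuclideanLin (U * Uᵀ) x)‖ ^ 2
        ≤ (ε * ‖x - toEuclideanLin (U * Uᵀ) x‖) ^ 2 :=
      pow_le_pow_left₀ (norm_nonneg _) hb_bound 2
    have h3 : ε ^ 2 * (‖x - toEuclideanLin (U * Uᵀ) x‖ ^ 2)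
        = ε ^ 2 * (‖x‖ ^ 2 - ‖toEuclideanLin Uᵀ x‖ ^ 2) := by rw [hpyth]
    nlinarith [h1, h2, h3]
  have hg : 0 ≤ ε * ‖x‖ := mul_nonneg hε0 (norm_nonneg x)
  nlinarith [norm_nonneg (toEuclideanLin (Ul * Ulᵀ - U * Uᵀ) x), hfinal, hg]
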